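/- Let n ≥ 4 and k ≥ 0 be integers, and let x_1 ≥ x_2 ≥ ⋯ ≥ x_n be integers such that x_1 + x_2 + ⋯ + x_n = k·(n − 2) and 2·x_n < k. Then x_1 + x_2 > k. -/
import Mathlib


/-- Let `n ≥ 4` and `k ≥ 0` be integers, and let
`x 0 ≥ x 1 ≥ ⋯ ≥ x (n-1)` be integers such that `∑ x i = k * (n - 2)` and
`2 * x (n-1) < k`. Then `x 0 + x 1 > k`. -/
theorem caterpillar_claim (n : ℕ) (hn : 4 ≤ n) (k : ℤ) (hk : 0 ≤ k)
    (x : Fin n → ℤ)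
    (hsort : ∀ i j : Fin n, i ≤ j → x j ≤ x i)
    (hsum : ∑ i, x i = k * ((n : ℤ) - 2))
    (hlast : 2 * x ⟨n - 1, by omega⟩ < k) :
    k < x ⟨0, by omega⟩ + x ⟨1, by omega⟩ := by
  have p0 : 0 < n := by omega
  have p1 : 1 < n := by omega
  have pl : n - 1 < n := by omega
  have hlast' : 2 * x ⟨n - 1, pl⟩ < k := hlast
  show k < x ⟨0, p0⟩ + x ⟨1, p1⟩
  by_contra hcon
  push_neg at hcon
  have hne : (⟨n - 1, pl⟩ : Fin n) ≠ ⟨0, p0⟩ := by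
    simp [Fin.ext_iff]; omega
  have hmem : (⟨n - 1, pl⟩ : Fin n) ∈ Finset.univ.erase ⟨0, p0⟩ :=
    Finset.mem_erase.2 ⟨hne, Finset.mem_univ _⟩
  have hsplit1 : ∑ i, x i
      = x ⟨0, p0⟩ + ∑ i ∈ Finset.univ.erase ⟨0, p0⟩, x i :=
    (Finset.add_sum_erase _ _ (Finset.mem_univ _)).symm
  have hsplit2 : ∑ i ∈ Finset.univ.erase (⟨0, p0⟩ : Fin n), x i
      = x ⟨n - 1, pl⟩
        + ∑ i ∈ (Finset.univ.erase ⟨0, p0⟩).erase ⟨n - 1, pl⟩, x i :=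
    (Finset.add_sum_erase _ _ hmem).symm
  have hcard : ((Finset.univ.erase (⟨0, p0⟩ : Fin n)).erase ⟨n - 1, pl⟩).card = n - 2 := by
    rw [Finset.card_erase_of_mem hmem, Finset.card_erase_of_mem (Finset.mem_univ _)]
    simp [Finset.card_univ]; omega
  have hbound : ∑ i ∈ (Finset.univ.erase (⟨0, p0⟩ : Fin n)).erase ⟨n - 1, pl⟩, x i
      ≤ ((Finset.univ.erase (⟨0, p0⟩ : Fin n)).erase ⟨n - 1, pl⟩).card • x ⟨1, p1⟩ := by
    apply Finset.sum_le_card_nsmul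
    intro i hi
    apply hsort
    have h1 : i ≠ (⟨0, p0⟩ : Fin n) := (Finset.mem_erase.1 (Finset.mem_erase.1 hi).2).1
    have h2 : (i : ℕ) ≠ 0 := by
      intro h; exact h1 (Fin.ext (by simp [h]))
    simp [Fin.le_def]; omega
  have hx1 : x ⟨1, p1⟩ ≤ x ⟨0, p0⟩ := hsort _ _ (by simp [Fin.le_def])
  have hnc : ((n - 2 : ℕ) : ℤ) = (n : ℤ) - 2 := by
    have h2 : (2 : ℕ) ≤ n := by omega
    push_cast [h2]; ring
  rw [hcard, nsmul_eq_mul, hnc] at hbound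
  have key : k * ((n : ℤ) - 2)
      ≤ x ⟨0, p0⟩ + x ⟨n - 1, pl⟩ + ((n : ℤ) - 2) * x ⟨1, p1⟩ := by
    rw [← hsum, hsplit1, hsplit2]
    linarith
  have hm : (4 : ℤ) ≤ (n : ℤ) := by exact_mod_cast hn
  nlinarith [mul_nonneg (by linarith : (0:ℤ) ≤ (n:ℤ) - 3)
      (by linarith : (0:ℤ) ≤ k - 2 * x ⟨1, p1⟩),
    mul_nonneg hk (by linarith : (0:ℤ) ≤ (n:ℤ) - 4)]
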